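/- If P is a hexagonal grid polygon whose adjacency graph is a simple path on its C(P) cells (a corridor of width 1), then E(P) = 4·C(P) + 2, and every exploration tour of P has length at least 2·C(P) − 2 = C(P) + (1/4)·E(P) − 5/2; hence the upper bound C + E/4 − 5/2 for exploring simple hexagonal grid polygons is tight. -/

import Mathlib

/-- A hexagonal grid cell in axial coordinates. -/
abbrev HexCell : Type := ℤ × ℤ

/-- The six neighbors of a hexagonal cell. -/
def hexNbrs (c : HexCell) : Finset HexCell :=
  {(c.1 + 1, c.2), (c.1 - 1, c.2), (c.1, c.2 + 1), (c.1, c.2 - 1),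
   (c.1 + 1, c.2 - 1), (c.1 - 1, c.2 + 1)}

/-- Adjacency of hexagonal cells. -/
def hexAdj (a b : HexCell) : Prop := b ∈ hexNbrs a

/-- A set `S` is connected under the relation `adj` (restricted to `S`). -/
def connectedOn {α : Type} (adj : α → α → Prop) (S : Set α) : Prop :=
  ∀ a ∈ S, ∀ b ∈ S, Relation.ReflTransGen (fun x y => x ∈ S ∧ y ∈ S ∧ adj x y) a b

/-- A hexagonal grid polygon: a finite nonempty set of cells, connected under adjacency. -/
def hexPolygon (P : Finset HexCell) : Prop :=
  P.Nonempty ∧ connectedOn hexAdj (↑P : Set HexCell)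

/-- A hexagonal grid polygon is simple if its complement is connected under adjacency. -/
def hexSimple (P : Finset HexCell) : Prop :=
  connectedOn hexAdj ((↑P : Set HexCell)ᶜ)

/-- The perimeter `E(P)`: the number of pairs `(c, c')` with `c ∈ P`, `c' ∉ P`, adjacent. -/
def hexPerim (P : Finset HexCell) : ℕ :=
  ∑ c ∈ P, (hexNbrs c \ P).card

/-- An exploration tour of `P`: a closed walk `w 0, w 1, …, w L` in `P`
(consecutive cells adjacent, `w 0 = w L`) visiting every cell of `P`;
its length is `L` (the number of steps). -/
def IsHexTour (P : Finset HexCell) (w : ℕ → HexCell) (L : ℕ) : Prop :=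
  w 0 = w L ∧ (∀ i ≤ L, w i ∈ P) ∧ (∀ i < L, hexAdj (w i) (w (i + 1))) ∧
    ∀ c ∈ P, ∃ i ≤ L, w i = c

/-- A path in `P` from `s` to `t`: a list of cells of `P`, consecutive cells adjacent;
its length (number of steps) is `l.length - 1`. -/
def IsHexPathIn (P : Finset HexCell) (l : List HexCell) (s t : HexCell) : Prop :=
  l.head? = some s ∧ l.getLast? = some t ∧ (∀ c ∈ l, c ∈ P) ∧ l.Chain' hexAdj

/-- The first layer of `P`: cells of `P` adjacent to some cell not in `P`. -/
def hexFirstLayer (P : Finset HexCell) : Finset HexCell :=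
  P.filter (fun c => (hexNbrs c \ P).Nonempty)

/-- The `ℓ`-offset of `P`: remove the first layer `ℓ` times. -/
def hexOffset (ℓ : ℕ) (P : Finset HexCell) : Finset HexCell :=
  (fun Q => Q \ hexFirstLayer Q)^[ℓ] P

/-- The layer number of a cell `c` of `P`: the `ℓ ≥ 1` such that `c` lies in the
first layer of the `(ℓ-1)`-offset of `P`, i.e. the least `n` with `c ∉ hexOffset n P`. -/
noncomputable def hexLayerNum (P : Finset HexCell) (c : HexCell) : ℕ :=
  sInf {n : ℕ | c ∉ hexOffset n P}

/-- A cell `c` belongs to a narrow passage of `P` if it lies in the first layer of `P` and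
removing it does not change the layer number of any other cell. -/
def hexNarrowCell (P : Finset HexCell) (c : HexCell) : Prop :=
  c ∈ hexFirstLayer P ∧
    ∀ c' ∈ P.erase c, hexLayerNum (P.erase c) c' = hexLayerNum P c'

/-- `P` has a split cell in its first layer: there is a set `Q` consisting of a single
first-layer cell, or of two adjacent first-layer cells, with `P \\ Q` disconnected. -/
def hexSplitInFirstLayer (P : Finset HexCell) : Prop :=
  ∃ Q : Finset HexCell,
    ((∃ a ∈ hexFirstLayer P, Q = {a}) ∨
      (∃ a ∈ hexFirstLayer P, ∃ b ∈ hexFirstLayer P, a ≠ b ∧ hexAdj a b ∧ Q = {a, b})) ∧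
    ¬ connectedOn hexAdj (↑(P \ Q) : Set HexCell)

/-- Graph distance in the (full) hexagonal grid: least number of steps between
adjacent cells needed to go from `a` to `b`. -/
noncomputable def hexDist (a b : HexCell) : ℕ :=
  sInf {n : ℕ | ∃ w : ℕ → HexCell, w 0 = a ∧ w n = b ∧ ∀ i < n, hexAdj (w i) (w (i + 1))}

/-- If the adjacency graph of a hexagonal grid polygon `P` is a simple path on its
`C(P)` cells (a corridor of width 1), then `E(P) = 4·C(P) + 2`, every exploration tour
of `P` has length at least `2·C(P) − 2`, and `2·C(P) − 2 = C(P) + E(P)/4 − 5/2`;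
hence the upper bound `C + E/4 − 5/2` is tight. -/

lemma hexNbrs_card' (c : ℤ × ℤ) : ({(c.1 + 1, c.2), (c.1 - 1, c.2), (c.1, c.2 + 1), (c.1, c.2 - 1),
   (c.1 + 1, c.2 - 1), (c.1 - 1, c.2 + 1)} : Finset (ℤ × ℤ)).card = 6 := by
  rw [Finset.card_insert_of_notMem (by simp [Prod.ext_iff]; omega),
      Finset.card_insert_of_notMem (by simp [Prod.ext_iff]; omega),
      Finset.card_insert_of_notMem (by simp [Prod.ext_iff]; omega),
      Finset.card_insert_of_notMem (by simp [Prod.ext_iff]; omega),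
      Finset.card_insert_of_notMem (by simp [Prod.ext_iff]; omega)]
  rfl

lemma sum_S' (n : ℕ) : ∑ i ∈ Finset.range n,
    ((Finset.range n).filter (fun j => i+1 = j ∨ j+1 = i)).card = 2*(n-1) := by
  have h1 : ∀ i j : ℕ, (if (i+1=j ∨ j+1=i) then (1:ℕ) else 0)
      = (if i+1=j then 1 else 0) + (if j+1=i then 1 else 0) := by
    intro i j; split_ifs <;> omega
  have hcart : ∑ i ∈ Finset.range n, (if i+1 < n then (1:ℕ) else 0) = n - 1 := by
    rw [← Finset.card_filter]
    have : (Finset.range n).filter (fun i => i+1 < n) = Finset.range (n-1) := by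
      ext i; simp [Finset.mem_filter, Finset.mem_range]; omega
    rw [this, Finset.card_range]
  simp only [Finset.card_filter]
  calc ∑ i ∈ Finset.range n, ∑ j ∈ Finset.range n, (if (i+1=j ∨ j+1=i) then (1:ℕ) else 0)
      = ∑ i ∈ Finset.range n, ∑ j ∈ Finset.range n,
        ((if i+1=j then (1:ℕ) else 0) + (if j+1=i then 1 else 0)) := by
        exact Finset.sum_congr rfl fun i _ => Finset.sum_congr rfl fun j _ => h1 i j
    _ = (∑ i ∈ Finset.range n, ∑ j ∈ Finset.range n, (if i+1=j then (1:ℕ) else 0))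
        + ∑ i ∈ Finset.range n, ∑ j ∈ Finset.range n, (if j+1=i then (1:ℕ) else 0) := by
        simp only [Finset.sum_add_distrib]
    _ = 2*(n-1) := by
        rw [Finset.sum_comm (s := Finset.range n) (t := Finset.range n)
          (f := fun i j => if j+1=i then (1:ℕ) else 0)]
        simp only [Finset.sum_ite_eq, Finset.mem_range]
        rw [hcart]; omega

lemma cross_aux' (Q : ℕ → Prop) : ∀ b a, a ≤ b → Q a → ¬ Q b →
    ∃ i, a ≤ i ∧ i < b ∧ Q i ∧ ¬ Q (i+1) := by
  intro b
  induction b with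
  | zero => intro a ha hQ hnQ; exact absurd (Nat.le_zero.1 ha ▸ hQ) hnQ
  | succ b ih =>
    intro a ha hQa hnQ
    have hab : a ≤ b := by
      rcases Nat.lt_succ_iff_lt_or_eq.1 (Nat.lt_succ_of_le ha) with h | h
      · omega
      · exact absurd (h ▸ hQa) hnQ
    by_cases hb : Q b
    · exact ⟨b, hab, Nat.lt_succ_self b, hb, hnQ⟩
    · obtain ⟨i, h1, h2, h3, h4⟩ := ih a hab hQa hb
      exact ⟨i, h1, by omega, h3, h4⟩


theorem hex_width_one_corridor_tight (P : Finset HexCell) (hP : hexPolygon P)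
    (f : Fin P.card → HexCell) (hinj : Function.Injective f)
    (hrange : ∀ c, c ∈ P ↔ ∃ i, f i = c)
    (hpath : ∀ i j : Fin P.card,
      hexAdj (f i) (f j) ↔ ((i : ℕ) + 1 = (j : ℕ) ∨ (j : ℕ) + 1 = (i : ℕ))) :
    hexPerim P = 4 * P.card + 2 ∧
    (∀ (w : ℕ → HexCell) (L : ℕ), IsHexTour P w L →
      2 * (P.card : ℚ) - 2 ≤ (L : ℚ)) ∧
    2 * (P.card : ℚ) - 2 = (P.card : ℚ) + (hexPerim P : ℚ) / 4 - 5 / 2 := by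
  classical
  obtain ⟨hne, -⟩ := hP
  have hn : 0 < P.card := Finset.card_pos.2 hne
  have himg : Finset.image f Finset.univ = P := by
    apply Finset.eq_of_subset_of_card_le
    · intro c hc
      simp only [Finset.mem_image] at hc
      obtain ⟨i, -, rfl⟩ := hc
      exact (hrange (f i)).2 ⟨i, rfl⟩
    · rw [Finset.card_image_of_injective _ hinj, Finset.card_univ, Fintype.card_fin]
  have hinter : ∀ i : Fin P.card, hexNbrs (f i) ∩ P
      = Finset.image f (Finset.univ.filter
          (fun j : Fin P.card => (i:ℕ)+1 = (j:ℕ) ∨ (j:ℕ)+1 = (i:ℕ))) := by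
    intro i
    ext c
    simp only [Finset.mem_inter, Finset.mem_image, Finset.mem_filter, Finset.mem_univ, true_and]
    constructor
    · rintro ⟨hc1, hc2⟩
      obtain ⟨j, rfl⟩ := (hrange c).1 hc2
      exact ⟨j, (hpath i j).1 hc1, rfl⟩
    · rintro ⟨j, hj, rfl⟩
      exact ⟨(hpath i j).2 hj, (hrange (f j)).2 ⟨j, rfl⟩⟩
  have hcardfin : ∀ i : Fin P.card,
      (Finset.univ.filter (fun j : Fin P.card => (i:ℕ)+1 = (j:ℕ) ∨ (j:ℕ)+1 = (i:ℕ))).card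
      = ((Finset.range P.card).filter (fun j => (i:ℕ)+1 = j ∨ j+1 = (i:ℕ))).card := by
    intro i
    refine Finset.card_nbij (s := Finset.univ.filter
        (fun j : Fin P.card => (i:ℕ)+1 = (j:ℕ) ∨ (j:ℕ)+1 = (i:ℕ)))
      (t := (Finset.range P.card).filter (fun j => (i:ℕ)+1 = j ∨ j+1 = (i:ℕ)))
      (fun j => (j : ℕ)) ?_ ?_ ?_
    · intro a ha
      simp only [Finset.coe_filter, Finset.mem_filter, Finset.mem_univ, true_and, Set.mem_setOf_eq] at ha
      simp only [Finset.coe_filter, Finset.mem_filter, Finset.mem_range, Set.mem_setOf_eq]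
      exact ⟨a.isLt, ha⟩
    · exact fun a _ b _ h => Fin.val_injective h
    · intro m hm
      simp only [Finset.coe_filter, Finset.mem_range, Set.mem_setOf_eq] at hm
      refine ⟨⟨m, hm.1⟩, ?_, rfl⟩
      simp only [Finset.coe_filter, Finset.mem_univ, Set.mem_setOf_eq, true_and]
      exact hm.2
  have hsum_inter : ∑ c ∈ P, (hexNbrs c ∩ P).card = 2*(P.card-1) := by
    rw [← himg, Finset.sum_image (fun a _ b _ h => hinj h), himg]
    calc ∑ i : Fin P.card, (hexNbrs (f i) ∩ P).card
        = ∑ i : Fin P.card, ((Finset.range P.card).filter (fun j => (i:ℕ)+1 = j ∨ j+1 = (i:ℕ))).card := by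
          refine Finset.sum_congr rfl fun i _ => ?_
          rw [hinter i, Finset.card_image_of_injective _ hinj, hcardfin i]
      _ = ∑ i ∈ Finset.range P.card, ((Finset.range P.card).filter (fun j => i+1 = j ∨ j+1 = i)).card :=
          Fin.sum_univ_eq_sum_range
            (fun m => ((Finset.range P.card).filter (fun j => m+1 = j ∨ j+1 = m)).card) P.card
      _ = 2*(P.card-1) := sum_S' P.card
  have hperim : hexPerim P = 4*P.card + 2 := by
    have h6 : hexPerim P + ∑ c ∈ P, (hexNbrs c ∩ P).card = 6*P.card := by
      rw [hexPerim, ← Finset.sum_add_distrib]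
      have : ∀ c ∈ P, (hexNbrs c \ P).card + (hexNbrs c ∩ P).card = 6 := by
        intro c _
        rw [Finset.card_sdiff_add_card_inter]
        exact hexNbrs_card' c
      rw [Finset.sum_congr rfl this, Finset.sum_const, smul_eq_mul, mul_comm]
    rw [hsum_inter] at h6
    omega
  refine ⟨hperim, ?_, by rw [hperim]; push_cast; ring⟩
  intro w L hw
  obtain ⟨hw0, hmem, hadj, hvis⟩ := hw
  by_cases h1 : P.card ≤ 1
  · have hc1 : (P.card : ℚ) = 1 := by rw [show P.card = 1 by omega]; norm_num
    rw [hc1]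
    have : (0:ℚ) ≤ L := Nat.cast_nonneg L
    linarith
  push_neg at h1
  obtain ⟨g, hg⟩ : ∃ g : ℕ → Fin P.card, ∀ i ≤ L, f (g i) = w i := by
    refine ⟨fun i => if h : w i ∈ P then ((hrange (w i)).1 h).choose else ⟨0, hn⟩, ?_⟩
    intro i hi
    have h := hmem i hi
    simp only [dif_pos h]
    exact ((hrange (w i)).1 h).choose_spec
  have hstep : ∀ i < L, ((g i : ℕ)+1 = (g (i+1) : ℕ)) ∨ ((g (i+1) : ℕ)+1 = (g i : ℕ)) := by
    intro i hi
    refine (hpath (g i) (g (i+1))).1 ?_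
    rw [hg i hi.le, hg (i+1) hi]
    exact hadj i hi
  have h0L : (g 0 : ℕ) = (g L : ℕ) := by
    have : f (g 0) = f (g L) := by rw [hg 0 (Nat.zero_le L), hg L le_rfl, hw0]
    exact congrArg Fin.val (hinj this)
  have hvis' : ∀ k, k < P.card → ∃ i ≤ L, (g i : ℕ) = k := by
    intro k hk
    obtain ⟨i, hi, hwi⟩ := hvis (f ⟨k, hk⟩) ((hrange _).2 ⟨⟨k, hk⟩, rfl⟩)
    refine ⟨i, hi, ?_⟩
    have : f (g i) = f ⟨k, hk⟩ := by rw [hg i hi, hwi]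
    exact congrArg Fin.val (hinj this)
  have hup : ∀ k, k + 1 < P.card → ∃ i < L, (g i : ℕ) = k ∧ (g (i+1) : ℕ) = k + 1 := by
    intro k hk
    obtain ⟨a, haL, hga⟩ := hvis' k (by omega)
    obtain ⟨b, hbL, hgb⟩ := hvis' (P.card-1) (by omega)
    have finish : ∀ i, i < L → (g i : ℕ) ≤ k → ¬((g (i+1) : ℕ) ≤ k) →
        (g i : ℕ) = k ∧ (g (i+1) : ℕ) = k + 1 := by
      intro i hiL hle hgt
      rcases hstep i hiL with h | h <;> omega
    by_cases h0 : (g 0 : ℕ) ≤ k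
    · obtain ⟨i, -, hib, hQ, hnQ⟩ :=
        cross_aux' (fun i => (g i : ℕ) ≤ k) b 0 (Nat.zero_le b) h0 (by omega)
      exact ⟨i, by omega, finish i (by omega) hQ hnQ⟩
    · obtain ⟨i, -, hiL, hQ, hnQ⟩ :=
        cross_aux' (fun i => (g i : ℕ) ≤ k) L a haL (by omega) (by omega)
      exact ⟨i, hiL, finish i hiL hQ hnQ⟩
  have hdown : ∀ k, k + 1 < P.card → ∃ i < L, (g i : ℕ) = k + 1 ∧ (g (i+1) : ℕ) = k := by
    intro k hk
    obtain ⟨a, haL, hga⟩ := hvis' k (by omega)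
    obtain ⟨b, hbL, hgb⟩ := hvis' (P.card-1) (by omega)
    have finish : ∀ i, i < L → k < (g i : ℕ) → ¬(k < (g (i+1) : ℕ)) →
        (g i : ℕ) = k + 1 ∧ (g (i+1) : ℕ) = k := by
      intro i hiL hgt hle
      rcases hstep i hiL with h | h <;> omega
    by_cases h0 : k < (g 0 : ℕ)
    · obtain ⟨i, -, hia, hQ, hnQ⟩ :=
        cross_aux' (fun i => k < (g i : ℕ)) a 0 (Nat.zero_le a) h0 (by omega)
      exact ⟨i, by omega, finish i (by omega) hQ hnQ⟩
    · obtain ⟨i, -, hiL, hQ, hnQ⟩ :=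
        cross_aux' (fun i => k < (g i : ℕ)) L b hbL (by omega) (by omega)
      exact ⟨i, hiL, finish i hiL hQ hnQ⟩
  have hLcard : L = ∑ k ∈ Finset.range (P.card-1),
      ((Finset.range L).filter (fun i => min (g i : ℕ) (g (i+1) : ℕ) = k)).card := by
    have h := Finset.card_eq_sum_card_fiberwise
      (s := Finset.range L) (t := Finset.range (P.card-1))
      (f := fun i => min (g i : ℕ) (g (i+1) : ℕ)) ?_
    · rwa [Finset.card_range] at h
    intro i hi
    simp only [Finset.mem_coe, Finset.mem_range] at hi ⊢
    have h1 := (g i).isLt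
    have h2 := (g (i+1)).isLt
    have h3 : min ((g i : ℕ)) ((g (i+1) : ℕ)) ≤ (g i : ℕ) := min_le_left _ _
    have h4 : min ((g i : ℕ)) ((g (i+1) : ℕ)) ≤ (g (i+1) : ℕ) := min_le_right _ _
    show min ((g i : ℕ)) ((g (i+1) : ℕ)) < P.card - 1
    rcases hstep i hi with h | h <;> omega
  have hfib : ∀ k ∈ Finset.range (P.card-1), 2 ≤
      ((Finset.range L).filter (fun i => min (g i : ℕ) (g (i+1) : ℕ) = k)).card := by
    intro k hk
    rw [Finset.mem_range] at hk
    obtain ⟨iu, hiu, hu1, hu2⟩ := hup k (by omega)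
    obtain ⟨jd, hjd, hd1, hd2⟩ := hdown k (by omega)
    have hne' : iu ≠ jd := by intro h; rw [h, hd1] at hu1; omega
    have hmemu : iu ∈ (Finset.range L).filter
        (fun i => min (g i : ℕ) (g (i+1) : ℕ) = k) := by
      simp only [Finset.mem_filter, Finset.mem_range]
      exact ⟨hiu, by rw [hu1, hu2]; exact min_eq_left (by omega)⟩
    have hmemd : jd ∈ (Finset.range L).filter
        (fun i => min (g i : ℕ) (g (i+1) : ℕ) = k) := by
      simp only [Finset.mem_filter, Finset.mem_range]
      exact ⟨hjd, by rw [hd1, hd2]; exact min_eq_right (by omega)⟩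
    have hsub : ({iu, jd} : Finset ℕ) ⊆ (Finset.range L).filter
        (fun i => min (g i : ℕ) (g (i+1) : ℕ) = k) := by
      intro x hx
      rcases Finset.mem_insert.1 hx with rfl | hx
      · exact hmemu
      · rw [Finset.mem_singleton] at hx; exact hx ▸ hmemd
    calc 2 = ({iu, jd} : Finset ℕ).card := (Finset.card_pair hne').symm
      _ ≤ _ := Finset.card_le_card hsub
  have hkey : 2*(P.card-1) ≤ L := by
    rw [hLcard]
    calc 2*(P.card-1) = ∑ _k ∈ Finset.range (P.card-1), 2 := by
          rw [Finset.sum_const, Finset.card_range, smul_eq_mul]; ring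
      _ ≤ _ := Finset.sum_le_sum hfib
  have hq : ((2*(P.card-1) : ℕ) : ℚ) ≤ (L : ℚ) := Nat.cast_le.2 hkey
  push_cast [Nat.cast_sub (show 1 ≤ P.card by omega)] at hq
  linarith
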